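/- Let π be a Baxter permutation of [n] and for 1 ≤ i ≤ n−1 say i is an 'l-step' if the node labeled i+1 in MinC(π) is a left child of its parent, and an 'r-step' otherwise. If i is an 'l-step' and the node labeled i (position π^{-1}(i)) has a left child in MinC(π), then the node labeled i+1 is the left child of the node labeled i. -/

import Mathlib

/-- `π` is a permutation of `[n] = {1,…,n}`. -/
def IsPermOn (n : ℕ) (π : ℕ → ℕ) : Prop :=
  Set.BijOn π (Set.Icc 1 n) (Set.Icc 1 n)

/-- `π` (a map on `{1,…,n}`) is a Baxter permutation: it avoids the vincular
patterns 2-41-3 and 3-14-2. -/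
def IsBaxter (n : ℕ) (π : ℕ → ℕ) : Prop :=
  ∀ i j k : ℕ, 1 ≤ i → i < j → j < k → k ≤ n →
    ¬(π (j + 1) < π i ∧ π i < π k ∧ π k < π j) ∧
    ¬(π j < π k ∧ π k < π i ∧ π i < π (j + 1))

/-- `π` (a map on `{1,…,n}`) is a separable permutation: it avoids the classical
patterns 2413 and 3142. -/
def IsSeparablePerm (n : ℕ) (π : ℕ → ℕ) : Prop :=
  ∀ i1 i2 i3 i4 : ℕ, 1 ≤ i1 → i1 < i2 → i2 < i3 → i3 < i4 → i4 ≤ n →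
    ¬(π i3 < π i1 ∧ π i1 < π i4 ∧ π i4 < π i2) ∧
    ¬(π i2 < π i4 ∧ π i4 < π i1 ∧ π i1 < π i3)

/-- Binary trees with natural-number labels at internal nodes. -/
inductive BTree where
  | leaf : BTree
  | node : BTree → ℕ → BTree → BTree

/-- Membership of a label in a binary tree. -/
def BTree.mem : BTree → ℕ → Prop
  | .leaf, _ => False
  | .node l x r, v => v = x ∨ l.mem v ∨ r.mem v

/-- Inorder traversal of a binary tree. -/
def BTree.inorder : BTree → List ℕ
  | .leaf => []
  | .node l x r => l.inorder ++ x :: r.inorder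

/-- The label at the root, if any. -/
def BTree.rootLabel : BTree → Option ℕ
  | .leaf => none
  | .node _ x _ => some x

/-- `IsMinC S t` holds iff `t` is the minimum Cartesian tree of the sequence `S`:
the root carries the minimum of `S` and the subtrees are the minimum Cartesian
trees of the prefix and suffix around it. -/
inductive IsMinC : List ℕ → BTree → Prop where
  | leaf : IsMinC [] .leaf
  | node : ∀ (l r : List ℕ) (x : ℕ) (tl tr : BTree),
      (∀ y ∈ l, x < y) → (∀ y ∈ r, x < y) →
      IsMinC l tl → IsMinC r tr → IsMinC (l ++ x :: r) (.node tl x tr)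

/-- The sequence `(π(1), …, π(n))` as a list. -/
def permList (n : ℕ) (π : ℕ → ℕ) : List ℕ :=
  (List.range n).map (fun k => π (k + 1))

/-- In `t`, the node labeled `c` is the left child of the node labeled `p`. -/
def leftChildRel : BTree → ℕ → ℕ → Prop
  | .leaf, _, _ => False
  | .node l x r, p, c =>
      (x = p ∧ l.rootLabel = some c) ∨ leftChildRel l p c ∨ leftChildRel r p c

/-- In `t`, the node labeled `c` is the right child of the node labeled `p`. -/
def rightChildRel : BTree → ℕ → ℕ → Prop
  | .leaf, _, _ => False
  | .node l x r, p, c =>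
      (x = p ∧ r.rootLabel = some c) ∨ rightChildRel l p c ∨ rightChildRel r p c

section Helpers

lemma getElem?_mem' {L : List ℕ} {a v : ℕ} (h : L[a]? = some v) : v ∈ L := by
  obtain ⟨hb, he⟩ := List.getElem?_eq_some_iff.mp h
  exact he ▸ List.getElem_mem hb

lemma nodup_inj' {L : List ℕ} (h : L.Nodup) {a b v : ℕ}
    (ha : L[a]? = some v) (hb : L[b]? = some v) : a = b := by
  obtain ⟨h1, e1⟩ := List.getElem?_eq_some_iff.mp ha
  obtain ⟨h2, e2⟩ := List.getElem?_eq_some_iff.mp hb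
  exact (h.getElem_inj_iff).mp (e1.trans e2.symm)

lemma mid_get (l r : List ℕ) (x : ℕ) : (l ++ x :: r)[l.length]? = some x := by
  rw [List.getElem?_append_right le_rfl]; simp

lemma right_get (l r : List ℕ) (x m : ℕ) (h : l.length < m) :
    (l ++ x :: r)[m]? = r[m - l.length - 1]? := by
  rw [List.getElem?_append_right (by omega)]
  obtain ⟨k, hk⟩ : ∃ k, m - l.length = k + 1 := ⟨m - l.length - 1, by omega⟩
  rw [hk, List.getElem?_cons_succ]
  simp

lemma left_get (l r : List ℕ) (m : ℕ) (h : m < l.length) : (l ++ r)[m]? = l[m]? := by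
  rw [List.getElem?_append, if_pos h]

lemma lcr_mem_parent : ∀ (t : BTree) {p c : ℕ}, leftChildRel t p c → t.mem p
  | .leaf, _, _, h => h.elim
  | .node l x r, p, c, h => by
    rcases h with ⟨rfl, _⟩ | h | h
    · exact Or.inl rfl
    · exact Or.inr (Or.inl (lcr_mem_parent l h))
    · exact Or.inr (Or.inr (lcr_mem_parent r h))

lemma minc_mem {L : List ℕ} {t : BTree} (hm : IsMinC L t) {v : ℕ} (h : t.mem v) : v ∈ L := by
  induction hm with
  | leaf => exact h.elim
  | node l r x tl tr hxl hxr hml hmr ihl ihr =>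
    rcases h with rfl | h | h
    · simp
    · simp [ihl h]
    · simp [ihr h]

/-- The key structural data extracted from "`c` is a left child of `p`" in a
min-Cartesian tree of `L`. -/
def LSpec (L : List ℕ) (p c : ℕ) : Prop :=
  ∃ a b, a < b ∧ b < L.length ∧ L[a]? = some c ∧ L[b]? = some p ∧ p < c ∧
    (∀ m y, a < m → m < b → L[m]? = some y → c < y) ∧
    (∀ m y, m < a → L[m]? = some y → y < c →
      ∃ l z, m ≤ l ∧ l < a ∧ L[l]? = some z ∧ z < p ∧
        ∀ j w, l < j → j < a → L[j]? = some w → c < w)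

lemma lcr_spec : ∀ {L : List ℕ} {t : BTree}, IsMinC L t → L.Nodup →
    ∀ {p c : ℕ}, leftChildRel t p c → LSpec L p c := by
  intro L t hm
  induction hm with
  | leaf => intro _ p c h; exact h.elim
  | node l r x tl tr hxl hxr hml hmr ihl ihr =>
    intro hnd p c h
    have hndl : l.Nodup := hnd.of_append_left
    have hndr : r.Nodup := (hnd.of_append_right).of_cons
    rcases h with ⟨rfl, hroot⟩ | h | h
    · -- c is the root of tl, parent is x
      cases tl with
      | leaf => simp [BTree.rootLabel] at hroot
      | node tll cc tlr =>
        simp only [BTree.rootLabel, Option.some.injEq] at hroot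
        subst hroot
        cases hml
        rename_i l1 r1 hm1 h1 h2 hm2
        refine ⟨l1.length, (l1 ++ cc :: r1).length, by simp, by simp, ?_, ?_, ?_, ?_, ?_⟩
        · have e : (l1 ++ cc :: r1) ++ x :: r = l1 ++ cc :: (r1 ++ x :: r) := by simp
          rw [e]; exact mid_get _ _ _
        · exact mid_get _ _ _
        · exact hxl cc (by simp)
        · intro m y hm1' hm2' hy
          rw [left_get _ _ m hm2', right_get _ _ _ _ hm1'] at hy
          exact h2 y (getElem?_mem' hy)
        · intro m y hma hy hyc
          rw [left_get _ _ m (by simp; omega), left_get _ _ m hma] at hy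
          exact absurd hyc (Nat.lt_asymm (h1 y (getElem?_mem' hy)))
    · -- recurse into left subtree
      obtain ⟨a, b, hab, hbl, ha, hb, hpc, hmid, hprev⟩ := ihl hndl h
      have hblen : b < l.length := hbl
      have halen : a < l.length := by omega
      refine ⟨a, b, hab, by simp; omega, ?_, ?_, hpc, ?_, ?_⟩
      · rw [left_get _ _ a halen]; exact ha
      · rw [left_get _ _ b hblen]; exact hb
      · intro m y h1 h2 h3
        rw [left_get _ _ m (by omega)] at h3
        exact hmid m y h1 h2 h3
      · intro m y h1 h2 h3
        rw [left_get _ _ m (by omega)] at h2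
        obtain ⟨l0, z, hml0, hl0a, hz, hzp, hjj⟩ := hprev m y h1 h2 h3
        refine ⟨l0, z, hml0, hl0a, ?_, hzp, ?_⟩
        · rw [left_get _ _ l0 (by omega)]; exact hz
        · intro j w hj1 hj2 hw
          rw [left_get _ _ j (by omega)] at hw
          exact hjj j w hj1 hj2 hw
    · -- recurse into right subtree
      obtain ⟨a, b, hab, hbl, ha, hb, hpc, hmid, hprev⟩ := ihr hndr h
      have eR : ∀ k, (l ++ x :: r)[l.length + 1 + k]? = r[k]? := by
        intro k
        rw [right_get l r x _ (by omega)]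
        congr 1
        omega
      refine ⟨l.length + 1 + a, l.length + 1 + b, by omega, by simp; omega, ?_, ?_, hpc, ?_, ?_⟩
      · rw [eR a]; exact ha
      · rw [eR b]; exact hb
      · intro m y h1 h2 h3
        rw [right_get l r x m (by omega)] at h3
        exact hmid (m - l.length - 1) y (by omega) (by omega) h3
      · intro m y h1 h2 h3
        by_cases hmn : l.length < m
        · rw [right_get l r x m hmn] at h2
          obtain ⟨l0, z, hml0, hl0a, hz, hzp, hjj⟩ := hprev (m - l.length - 1) y (by omega) h2 h3
          refine ⟨l.length + 1 + l0, z, by omega, by omega, (eR l0).trans hz, hzp, ?_⟩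
          intro j w hj1 hj2 hw
          rw [right_get l r x j (by omega)] at hw
          exact hjj (j - l.length - 1) w (by omega) (by omega) hw
        · by_cases hex : ∃ k, k < a ∧ ∃ w, r[k]? = some w ∧ w < c
          · obtain ⟨k, hk, w, hw, hwc⟩ := hex
            obtain ⟨l0, z, hml0, hl0a, hz, hzp, hjj⟩ := hprev k w hk hw hwc
            refine ⟨l.length + 1 + l0, z, by omega, by omega, (eR l0).trans hz, hzp, ?_⟩
            intro j w' hj1 hj2 hw'
            rw [right_get l r x j (by omega)] at hw'
            exact hjj (j - l.length - 1) w' (by omega) (by omega) hw'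
          · push_neg at hex
            have hpr : p ∈ r := minc_mem hmr (lcr_mem_parent tr h)
            refine ⟨l.length, x, by omega, by omega, mid_get l r x, hxr p hpr, ?_⟩
            intro j w hj1 hj2 hw
            rw [right_get l r x j hj1] at hw
            have hge := hex (j - l.length - 1) (by omega) w hw
            have hne : w ≠ c := by
              intro e
              subst e
              have := nodup_inj' hndr hw ha
              omega
            omega

end Helpers

/-- If π is Baxter, the node labeled i+1 in MinC(π) is a left child of its
parent, and the node labeled i has a left child, then the node labeled i+1 is
the left child of the node labeled i. -/
theorem stmt8 (n : ℕ) (π : ℕ → ℕ) (t : BTree) (i : ℕ)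
    (hbax : IsBaxter n π) (hperm : IsPermOn n π)
    (ht : IsMinC (permList n π) t)
    (hi1 : 1 ≤ i) (hi2 : i ≤ n - 1)
    (hlstep : ∃ p, leftChildRel t p (i + 1))
    (hleft : ∃ c, leftChildRel t i c) :
    leftChildRel t i (i + 1) := by
  obtain ⟨p, hp⟩ := hlstep
  set L := permList n π with hLdef
  have hlen : L.length = n := by simp [hLdef, permList]
  have hget : ∀ k, k < n → L[k]? = some (π (k + 1)) := by
    intro k hk
    simp [hLdef, permList, List.getElem?_map, List.getElem?_range hk]
  have hval : ∀ k v, L[k]? = some v → π (k + 1) = v := by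
    intro k v hkv
    have hk : k < n := by
      have := (List.getElem?_eq_some_iff.mp hkv).1
      omega
    rw [hget k hk] at hkv
    simpa using hkv
  have hnd : L.Nodup := by
    refine List.Nodup.map_on ?_ List.nodup_range
    intro a ha b hb hab
    simp only [List.mem_range] at ha hb
    have := hperm.injOn (by simp; omega : a + 1 ∈ Set.Icc 1 n)
      (by simp; omega : b + 1 ∈ Set.Icc 1 n) hab
    omega
  -- position of i
  have hin : i ∈ Set.Icc 1 n := by simp; omega
  obtain ⟨q, hq, hqi⟩ := hperm.surjOn hin
  simp only [Set.mem_Icc] at hq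
  have hain : q - 1 < n := by omega
  have hgi : L[q - 1]? = some i := by
    rw [hget _ hain]
    congr 1
    rw [(by omega : q - 1 + 1 = q), hqi]
  set ai := q - 1 with hai
  obtain ⟨a, b, hab, hbl, ha, hb, hpc, hmid, hprev⟩ := lcr_spec ht hnd hp
  rw [hlen] at hbl
  by_cases hpi : p = i
  · subst hpi; exact hp
  exfalso
  have hplt : p < i := by omega
  rcases Nat.lt_trichotomy ai a with hlt | heq | hgt
  · -- Case A: i occurs before i+1
    obtain ⟨l0, z, hml0, hl0a, hz, hzp, hjj⟩ := hprev ai i hlt hgi (by omega)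
    have hπl0 : π (l0 + 1) = z := hval _ _ hz
    have hπb : π (b + 1) = p := hval _ _ hb
    have hπai : π (ai + 1) = i := hval _ _ hgi
    have h72 : i + 1 ≤ π (l0 + 1 + 1) := by
      rcases Nat.lt_or_ge (l0 + 1) a with hlt2 | hge
      · have := hjj (l0 + 1) (π (l0 + 1 + 1)) (by omega) hlt2 (hget _ (by omega))
        omega
      · have heq2 : l0 + 1 = a := by omega
        have := hval a (i + 1) ha
        rw [heq2]
        omega
    have hl0ai : ai < l0 := by
      rcases Nat.lt_or_ge ai l0 with h' | h'
      · exact h'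
      · have : ai = l0 := by omega
        rw [← this, hgi] at hz
        simp at hz
        omega
    have hB := (hbax (ai + 1) (l0 + 1) (b + 1) (by omega) (by omega) (by omega) (by omega)).2
    exact hB ⟨by omega, by omega, by omega⟩
  · rw [heq, ha] at hgi
    simp at hgi
  · -- Case B: i occurs after i+1
    have hbai : b < ai := by
      rcases Nat.lt_trichotomy ai b with h' | h' | h'
      · have := hmid ai i hgt h' hgi
        omega
      · rw [h', hb] at hgi
        simp at hgi
        omega
      · exact h'
    obtain ⟨c, hc⟩ := hleft
    obtain ⟨s, bc, hsbc, hbcl, hs, hbc, hic, hmid2, hprev2⟩ := lcr_spec ht hnd hc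
    have hbcai : bc = ai := nodup_inj' hnd hbc hgi
    rw [hbcai] at hsbc hmid2
    have hbs : b < s := by
      rcases Nat.lt_trichotomy s b with h' | h' | h'
      · have := hmid2 b p h' hbai hb
        omega
      · rw [h', hb] at hs
        simp at hs
        omega
      · exact h'
    have hcne : i + 1 < c := by
      rcases Nat.lt_or_ge (i + 1) c with h' | h'
      · exact h'
      · have : c = i + 1 := by omega
        rw [this] at hs
        have := nodup_inj' hnd hs ha
        omega
    obtain ⟨l0, z, hml0, hl0s, hz, hzp, hjj⟩ := hprev2 b p hbs hb (by omega)
    have hπl0 : π (l0 + 1) = z := hval _ _ hz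
    have hπai : π (ai + 1) = i := hval _ _ hgi
    have hπa : π (a + 1) = i + 1 := hval _ _ ha
    have h72 : i + 1 < π (l0 + 1 + 1) := by
      rcases Nat.lt_or_ge (l0 + 1) s with hlt2 | hge
      · have := hjj (l0 + 1) (π (l0 + 1 + 1)) (by omega) hlt2 (hget _ (by omega))
        omega
      · have heq2 : l0 + 1 = s := by omega
        have := hval s c hs
        rw [heq2]
        omega
    have hB := (hbax (a + 1) (l0 + 1) (ai + 1) (by omega) (by omega) (by omega) (by omega)).2
    exact hB ⟨by omega, by omega, by omega⟩
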